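/- For every positive integer n, every k ∈ {0,…,n−1}, and every integer j ≥ 1, one has the quantitative bound |(1/n²)·(√(j+1)+√j)/(√(j+(k+1)/n)+√(j+k/n)) − 1/n²| ≤ 1/(n²·j). -/

import Mathlib

set_option maxHeartbeats 800000


/-- For every positive integer n, every k ∈ {0,…,n−1} and every integer j ≥ 1, the
deviation of the measure ratio from 1/n² is at most 1/(n²·j). -/
theorem stmt_5 (n : ℕ) (hn : 0 < n) (k : ℕ) (hk : k ≤ n - 1) (j : ℕ) (hj : 1 ≤ j) :
    |(1 / (n : ℝ) ^ 2) *
        ((Real.sqrt ((j : ℝ) + 1) + Real.sqrt (j : ℝ)) /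
          (Real.sqrt ((j : ℝ) + ((k : ℝ) + 1) / n) + Real.sqrt ((j : ℝ) + (k : ℝ) / n)))
      - 1 / (n : ℝ) ^ 2| ≤ 1 / ((n : ℝ) ^ 2 * j) := by
  have hn' : (1:ℝ) ≤ n := by exact_mod_cast hn
  have hnpos : (0:ℝ) < n := by linarith
  have hj' : (1:ℝ) ≤ j := by exact_mod_cast hj
  have hjpos : (0:ℝ) < j := by linarith
  have hk1 : (k:ℝ) + 1 ≤ n := by
    have : k + 1 ≤ n := by omega
    exact_mod_cast this
  have hk0 : (0:ℝ) ≤ k := by positivity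
  set s := Real.sqrt j with hs
  set t := Real.sqrt ((j:ℝ) + 1) with ht
  set b1 := Real.sqrt ((j : ℝ) + ((k : ℝ) + 1) / n) with hb1
  set b2 := Real.sqrt ((j : ℝ) + (k : ℝ) / n) with hb2
  have hs1 : 1 ≤ s := by
    rw [hs, show (1:ℝ) = Real.sqrt 1 by simp]
    exact Real.sqrt_le_sqrt hj'
  have hspos : 0 < s := by linarith
  have hssq : s ^ 2 = j := Real.sq_sqrt hjpos.le
  have hq0 : (0:ℝ) ≤ (k:ℝ)/n := by positivity
  have hq2 : ((k:ℝ)+1)/n ≤ 1 := by rw [div_le_one hnpos]; exact hk1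
  have hq1 : (k:ℝ)/n ≤ ((k:ℝ)+1)/n := by
    gcongr
    linarith
  have lb1 : s ≤ b1 := Real.sqrt_le_sqrt (by nlinarith)
  have lb2 : s ≤ b2 := Real.sqrt_le_sqrt (by nlinarith)
  have ub1 : b1 ≤ t := Real.sqrt_le_sqrt (by nlinarith)
  have ub2 : b2 ≤ t := Real.sqrt_le_sqrt (by nlinarith)
  have hst : s ≤ t := Real.sqrt_le_sqrt (by linarith)
  have htub : t ≤ s + 1/s := by
    have h1 : (j:ℝ) + 1 ≤ (s + 1/s)^2 := by
      have : (s + 1/s)^2 = s^2 + 2 + (1/s)^2 := by field_simp; ring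
      nlinarith [sq_nonneg (1/s)]
    calc t ≤ Real.sqrt ((s + 1/s)^2) := Real.sqrt_le_sqrt h1
      _ = s + 1/s := Real.sqrt_sq (by positivity)
  set a := t + s with ha
  set b := b1 + b2 with hb
  have hbpos : 0 < b := by rw [hb]; linarith
  have h2s : (2:ℝ)/s = 2 * (1/s) := by ring
  have habs : |a - b| ≤ 2/s := by
    rw [abs_sub_le_iff, ha, hb, h2s]
    constructor <;> linarith
  have key : |a - b| ≤ b / j := by
    have h2 : (2:ℝ)/s = 2*s/j := by
      rw [← hssq]; field_simp
    have h3 : 2*s/j ≤ b/j := by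
      gcongr
      rw [hb]; linarith
    linarith [habs, h2, h3]
  have gen : ∀ (c x y : ℝ), y ≠ 0 → c * (x / y) - c = c * ((x - y) / y) := by
    intro c x y hy; field_simp
  have hrw : (1 / (n : ℝ) ^ 2) * (a / b) - 1 / (n : ℝ) ^ 2
      = (1 / (n : ℝ) ^ 2) * ((a - b) / b) := gen _ _ _ hbpos.ne'
  calc |(1 / (n : ℝ) ^ 2) * (a / b) - 1 / (n : ℝ) ^ 2|
      = (1 / (n : ℝ) ^ 2) * (|a - b| / b) := by
        rw [hrw, abs_mul, abs_div, abs_div, abs_one, abs_of_nonneg hbpos.le,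
          abs_of_nonneg (by positivity : (0:ℝ) ≤ (n:ℝ)^2)]
    _ ≤ (1 / (n : ℝ) ^ 2) * (1 / j) := by
        apply mul_le_mul_of_nonneg_left _ (by positivity)
        rw [div_le_div_iff₀ hbpos hjpos, one_mul]
        calc |a - b| * j ≤ (b / j) * j := mul_le_mul_of_nonneg_right key hjpos.le
          _ = b := div_mul_cancel₀ _ hjpos.ne'
    _ = 1 / ((n : ℝ) ^ 2 * j) := by rw [div_mul_div_comm, one_mul]
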